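/- In K((t)) with the higher topology, every basic compactoid O-submodule B = Σ_i p^{k_i} t^i (k_i = ∞ for all i below some bound) is compactoid: for every open lattice Λ = Σ_i p^{n_i} t^i there exist finitely many elements x_1, …, x_m ∈ K((t)) with B ⊆ Λ + Ox_1 + ⋯ + Ox_m. -/

import Mathlib

open Filter

variable {K : Type*}

noncomputable def wB (q : ℝ) : WithBot ℤ → ℝ :=
  WithBot.recBotCoe 0 fun k : ℤ => q ^ k

noncomputable def wT (q : ℝ) : WithTop ℤ → ℝ :=
  WithTop.recTopCoe 0 fun k : ℤ => q ^ (-k)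

/-- `a ∈ 𝔭^m` for `m ∈ ℤ ∪ {-∞}`, with `𝔭^{-∞} = K`. -/
def memB [NormedField K] (q : ℝ) (a : K) : WithBot ℤ → Prop :=
  WithBot.recBotCoe True fun k : ℤ => ‖a‖ ≤ q ^ (-k)

/-- `a ∈ 𝔭^m` for `m ∈ ℤ ∪ {∞}`, with `𝔭^{∞} = 0`. -/
def memT [NormedField K] (q : ℝ) (a : K) : WithTop ℤ → Prop :=
  WithTop.recTopCoe (a = 0) fun k : ℤ => ‖a‖ ≤ q ^ (-k)

/-- The set `Λ = Σ_i 𝔭^{n_i} t^i` in `K((t))`. -/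
def latticeSet [NormedField K] (q : ℝ) (n : ℤ → WithBot ℤ) : Set (LaurentSeries K) :=
  {x | ∀ i : ℤ, memB q (x.coeff i) (n i)}

/-- The set `B = Σ_i 𝔭^{k_i} t^i` in `K((t))`. -/
def bddSet [NormedField K] (q : ℝ) (k : ℤ → WithTop ℤ) : Set (LaurentSeries K) :=
  {x | ∀ i : ℤ, memT q (x.coeff i) (k i)}

/-- The admissible seminorm `‖Σ x_i t^i‖ = sup_i |x_i| q^{n_i}` (with `q^{-∞} = 0`). -/
noncomputable def sn [NormedField K] (q : ℝ) (n : ℤ → WithBot ℤ) (x : LaurentSeries K) : ℝ :=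
  ⨆ i : ℤ, ‖x.coeff i‖ * wB q (n i)

/-- Admissibility of the net `(n_i)`: `n_i = -∞` for all sufficiently large `i`. -/
def AdmNet (n : ℤ → WithBot ℤ) : Prop := ∃ i₀ : ℤ, ∀ i ≥ i₀, n i = ⊥

noncomputable def expOf : WithTop ℤ → ℤ := WithTop.recTopCoe 0 fun c => -c

/-- every basic compactoid `𝒪`-submodule `B = Σ_i 𝔭^{k_i} t^i` of `K((t))`
(with `k_i = ∞` for all `i` below some bound) is compactoid: for every open lattice
`Λ = Σ_i 𝔭^{n_i} t^i` there are finitely many `x₁, …, x_m ∈ K((t))` with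
`B ⊆ Λ + 𝒪x₁ + ⋯ + 𝒪x_m`. -/
theorem basic_compactoid_is_compactoid [NontriviallyNormedField K]
    (hna : IsNonarchimedean fun a : K => ‖a‖) (q : ℝ) (hq : 1 < q)
    (hval : ∀ a : K, a ≠ 0 → ∃ m : ℤ, ‖a‖ = q ^ m)
    (hsurj : ∀ m : ℤ, ∃ a : K, ‖a‖ = q ^ m)
    (k : ℤ → WithTop ℤ) (hk : ∃ j₀ : ℤ, ∀ i < j₀, k i = ⊤)
    (n : ℤ → WithBot ℤ) (hn : AdmNet n) :
    ∃ (m : ℕ) (xs : Fin m → LaurentSeries K),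
      bddSet (K := K) q k ⊆
        {y : LaurentSeries K | ∃ z ∈ latticeSet (K := K) q n, ∃ a : Fin m → K,
          (∀ s : Fin m, ‖a s‖ ≤ 1) ∧ y = z + ∑ s : Fin m, a s • xs s} := by
  obtain ⟨i₀, hi₀⟩ := hn
  obtain ⟨j₀, hj₀⟩ := hk
  have hq0 : (0:ℝ) < q := lt_trans one_pos hq
  set m : ℕ := (i₀ - j₀).toNat with hm
  choose b hbnorm using fun s : Fin m => hsurj (expOf (k (j₀ + (s:ℤ))))
  have hbne : ∀ s, b s ≠ 0 := by
    intro s hz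
    have h := hbnorm s
    rw [hz, norm_zero] at h
    exact absurd h.symm (ne_of_gt (zpow_pos hq0 _))
  refine ⟨m, fun s => HahnSeries.single (j₀ + (s:ℤ)) (b s), ?_⟩
  intro y hy
  set a : Fin m → K := fun s => y.coeff (j₀ + (s:ℤ)) / b s with ha
  have hanorm : ∀ s, ‖a s‖ ≤ 1 := by
    intro s
    have hys := hy (j₀ + (s:ℤ))
    cases hkc : k (j₀ + (s:ℤ)) with
    | top =>
      rw [hkc] at hys
      have : y.coeff (j₀ + (s:ℤ)) = 0 := hys
      simp [ha, this]
    | coe c =>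
      rw [hkc] at hys
      have hys' : ‖y.coeff (j₀ + (s:ℤ))‖ ≤ q ^ (-c) := hys
      have hbn : ‖b s‖ = q ^ (-c) := by rw [hbnorm s, hkc]; rfl
      rw [ha]
      simp only [norm_div]
      rw [div_le_one (by rw [hbn]; exact zpow_pos hq0 _), hbn]
      exact hys'
  set S : LaurentSeries K := ∑ s : Fin m, a s • HahnSeries.single (j₀ + (s:ℤ)) (b s) with hS
  have hScoeff : ∀ i : ℤ, S.coeff i = ∑ s : Fin m, a s * (if i = j₀ + (s:ℤ) then b s else 0) := by
    intro i
    rw [hS]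
    refine (map_sum (HahnSeries.coeff.addMonoidHom i) _ Finset.univ).trans ?_
    apply Finset.sum_congr rfl
    intro s _
    simp [HahnSeries.coeff_smul, HahnSeries.coeff_single, smul_eq_mul]
  refine ⟨y - S, ?_, a, hanorm, (sub_add_cancel y S).symm⟩
  intro i
  rcases lt_or_ge i j₀ with hij | hij
  · -- i < j₀ : y.coeff i = 0 and S.coeff i = 0
    have hy0 : y.coeff i = 0 := by
      have h := hy i; rw [hj₀ i hij] at h; exact h
    have hS0 : S.coeff i = 0 := by
      rw [hScoeff]
      apply Finset.sum_eq_zero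
      intro s _
      rw [if_neg, mul_zero]
      omega
    have : (y - S).coeff i = 0 := by rw [HahnSeries.coeff_sub, hy0, hS0, sub_zero]
    rw [this]
    cases hni : n i with
    | bot => trivial
    | coe c =>
      show ‖(0:K)‖ ≤ q ^ (-c)
      rw [norm_zero]
      exact le_of_lt (zpow_pos hq0 _)
  · rcases lt_or_ge i (j₀ + (m:ℤ)) with him | him
    · -- j₀ ≤ i < j₀ + m : coefficient cancels
      have hsm : (i - j₀).toNat < m := by omega
      set s₀ : Fin m := ⟨(i - j₀).toNat, hsm⟩ with hs₀
      have hidx : i = j₀ + ((s₀ : ℕ) : ℤ) := by simp [hs₀]; omega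
      have hS0 : S.coeff i = a s₀ * b s₀ := by
        rw [hScoeff]
        rw [Finset.sum_eq_single s₀]
        · rw [if_pos hidx]
        · intro s _ hne
          rw [if_neg, mul_zero]
          intro h
          apply hne
          apply Fin.ext
          omega
        · intro h; exact absurd (Finset.mem_univ s₀) h
      have : (y - S).coeff i = 0 := by
        rw [HahnSeries.coeff_sub, hS0, ha]
        simp only
        rw [div_mul_cancel₀ _ (hbne s₀), ← hidx, sub_self]
      rw [this]
      cases hni : n i with
      | bot => trivial
      | coe c =>
        show ‖(0:K)‖ ≤ q ^ (-c)
        rw [norm_zero]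
        exact le_of_lt (zpow_pos hq0 _)
    · -- i ≥ j₀ + m ≥ i₀ : n i = ⊥
      have : n i = ⊥ := hi₀ i (by omega)
      rw [this]
      trivial
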